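/- arXiv:math-ph/0604064 — 2 statements merged into one kernel-verified Lean document; each statement's English description precedes it below -/
import Mathlib

section
/- Fix real numbers t₀ < t₁ and smooth fields x, y, θ : ℝ × [0,ℓ] → ℝ satisfying the rolling constraints ẋ + R θ̇ y′ = 0 and ẏ − R θ̇ x′ = 0 on ℝ × [0,ℓ]. Consider the Lagrangian density L = (ρ/2)(ẋ² + ẏ²) + (α/2)θ̇² − (β/2)(θ′)² − (K/2)((x″)² + (y″)²) and the action S = ∫_{t₀}^{t₁} ∫₀^ℓ L dt ds. Then the following are equivalent: (i) for every smooth variation (V_x, V_y, V_θ) with compact support contained in (t₀, t₁) × (0, ℓ) satisfying the admissibility conditions V_x + R y′ V_θ = 0 and V_y − R x′ V_θ = 0 pointwise along (x, y, θ), the derivative at ε = 0 of ε ↦ S(x + εV_x, y + εV_y, θ + εV_θ) vanishes; (ii) there exist smooth multipliers λ, μ : (t₀, t₁) × (0, ℓ) → ℝ such that ρẍ + Kx⁗ = λ, ρÿ + Ky⁗ = μ, and αθ̈ − βθ″ = R(λ y′ − μ x′) hold on (t₀, t₁) × (0, ℓ). -/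
open MeasureTheory

/-- Partial derivative with respect to the first (time) variable. -/
noncomputable def pt (f : ℝ → ℝ → ℝ) : ℝ → ℝ → ℝ := fun t s => deriv (fun τ => f τ s) t

/-- Partial derivative with respect to the second (arclength) variable. -/
noncomputable def ps (f : ℝ → ℝ → ℝ) : ℝ → ℝ → ℝ := fun t s => deriv (fun σ => f t σ) s

/-- Smoothness of a field of two real variables. -/
def Smooth2 (f : ℝ → ℝ → ℝ) : Prop := ContDiff ℝ (⊤ : ℕ∞) (fun p : ℝ × ℝ => f p.1 p.2)

/-- Energy density of the planar Cosserat rod. -/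
noncomputable def Edens (ρ α β K : ℝ) (x y θ : ℝ → ℝ → ℝ) : ℝ → ℝ → ℝ := fun t s =>
  ρ / 2 * ((pt x t s) ^ 2 + (pt y t s) ^ 2) + α / 2 * (pt θ t s) ^ 2
    + K / 2 * ((ps (ps x) t s) ^ 2 + (ps (ps y) t s) ^ 2) + β / 2 * (ps θ t s) ^ 2

/-- Lagrangian density of the simplified nonholonomic planar Cosserat rod
(no inextensibility term). -/
noncomputable def rodLagNH (ρ α β K : ℝ) (x y θ : ℝ → ℝ → ℝ) : ℝ → ℝ → ℝ := fun t s =>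
  ρ / 2 * ((pt x t s) ^ 2 + (pt y t s) ^ 2) + α / 2 * (pt θ t s) ^ 2
    - β / 2 * (ps θ t s) ^ 2 - K / 2 * ((ps (ps x) t s) ^ 2 + (ps (ps y) t s) ^ 2)

namespace RodAux

lemma fd_t {f : ℝ → ℝ → ℝ} (hf : Smooth2 f) (t s : ℝ) :
    HasDerivAt (fun τ => f τ s) (fderiv ℝ (fun p : ℝ × ℝ => f p.1 p.2) (t, s) (1, 0)) t := by
  have h1 : HasDerivAt (fun τ : ℝ => (τ, s)) ((1 : ℝ), (0 : ℝ)) t :=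
    HasDerivAt.prodMk (hasDerivAt_id t) (hasDerivAt_const t s)
  exact (hf.differentiable (by simp) (t, s)).hasFDerivAt.comp_hasDerivAt t h1

lemma fd_s {f : ℝ → ℝ → ℝ} (hf : Smooth2 f) (t s : ℝ) :
    HasDerivAt (fun σ => f t σ) (fderiv ℝ (fun p : ℝ × ℝ => f p.1 p.2) (t, s) (0, 1)) s := by
  have h1 : HasDerivAt (fun σ : ℝ => (t, σ)) ((0 : ℝ), (1 : ℝ)) s :=
    HasDerivAt.prodMk (hasDerivAt_const s t) (hasDerivAt_id s)
  exact (hf.differentiable (by simp) (t, s)).hasFDerivAt.comp_hasDerivAt s h1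

lemma hasDerivAt_t {f : ℝ → ℝ → ℝ} (hf : Smooth2 f) (t s : ℝ) :
    HasDerivAt (fun τ => f τ s) (pt f t s) t := by
  have h := fd_t hf t s
  have : pt f t s = fderiv ℝ (fun p : ℝ × ℝ => f p.1 p.2) (t, s) (1, 0) := h.deriv
  rw [this]; exact h

lemma hasDerivAt_s {f : ℝ → ℝ → ℝ} (hf : Smooth2 f) (t s : ℝ) :
    HasDerivAt (fun σ => f t σ) (ps f t s) s := by
  have h := fd_s hf t s
  have : ps f t s = fderiv ℝ (fun p : ℝ × ℝ => f p.1 p.2) (t, s) (0, 1) := h.deriv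
  rw [this]; exact h

lemma smooth_pt {f : ℝ → ℝ → ℝ} (hf : Smooth2 f) : Smooth2 (pt f) := by
  have : (fun p : ℝ × ℝ => pt f p.1 p.2)
      = fun p : ℝ × ℝ => fderiv ℝ (fun q : ℝ × ℝ => f q.1 q.2) p (1, 0) := by
    funext p; exact (fd_t hf p.1 p.2).deriv
  rw [Smooth2, this]
  exact (hf.fderiv_right (le_refl _)).clm_apply contDiff_const

lemma smooth_ps {f : ℝ → ℝ → ℝ} (hf : Smooth2 f) : Smooth2 (ps f) := by
  have : (fun p : ℝ × ℝ => ps f p.1 p.2)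
      = fun p : ℝ × ℝ => fderiv ℝ (fun q : ℝ × ℝ => f q.1 q.2) p (0, 1) := by
    funext p; exact (fd_s hf p.1 p.2).deriv
  rw [Smooth2, this]
  exact (hf.fderiv_right (le_refl _)).clm_apply contDiff_const

lemma Smooth2.cont {f : ℝ → ℝ → ℝ} (hf : Smooth2 f) :
    Continuous (fun p : ℝ × ℝ => f p.1 p.2) := hf.continuous

end RodAux

namespace RodAux

lemma smooth_add_smul {f V : ℝ → ℝ → ℝ} (hf : Smooth2 f) (hV : Smooth2 V) (ε : ℝ) :
    Smooth2 (fun t s => f t s + ε * V t s) := hf.add (contDiff_const.mul hV)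

lemma pt_add_smul {f V : ℝ → ℝ → ℝ} (hf : Smooth2 f) (hV : Smooth2 V) (ε : ℝ) :
    pt (fun t s => f t s + ε * V t s) = fun t s => pt f t s + ε * pt V t s := by
  funext t s
  exact ((hasDerivAt_t hf t s).add ((hasDerivAt_t hV t s).const_mul ε)).deriv

lemma ps_add_smul {f V : ℝ → ℝ → ℝ} (hf : Smooth2 f) (hV : Smooth2 V) (ε : ℝ) :
    ps (fun t s => f t s + ε * V t s) = fun t s => ps f t s + ε * ps V t s := by
  funext t s
  exact ((hasDerivAt_s hf t s).add ((hasDerivAt_s hV t s).const_mul ε)).deriv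

lemma psps_add_smul {f V : ℝ → ℝ → ℝ} (hf : Smooth2 f) (hV : Smooth2 V) (ε : ℝ) :
    ps (ps (fun t s => f t s + ε * V t s))
      = fun t s => ps (ps f) t s + ε * ps (ps V) t s := by
  rw [ps_add_smul hf hV ε]
  exact ps_add_smul (smooth_ps hf) (smooth_ps hV) ε

/-- Vanishing outside the support. -/
lemma val_zero {V : ℝ → ℝ → ℝ} {t s : ℝ}
    (h : (t, s) ∉ tsupport (fun q : ℝ × ℝ => V q.1 q.2)) : V t s = 0 :=
  image_eq_zero_of_notMem_tsupport (f := fun q : ℝ × ℝ => V q.1 q.2) h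

lemma ps_zero {V : ℝ → ℝ → ℝ} {t s : ℝ}
    (h : (t, s) ∉ tsupport (fun q : ℝ × ℝ => V q.1 q.2)) : ps V t s = 0 := by
  have hopen : IsOpen ((tsupport (fun q : ℝ × ℝ => V q.1 q.2))ᶜ) :=
    (isClosed_tsupport _).isOpen_compl
  have hev : (fun σ => V t σ) =ᶠ[nhds s] (fun _ => (0 : ℝ)) := by
    have hmem : (tsupport (fun q : ℝ × ℝ => V q.1 q.2))ᶜ ∈ nhds ((t, s) : ℝ × ℝ) :=
      hopen.mem_nhds h
    have hcont : Continuous (fun σ : ℝ => ((t, σ) : ℝ × ℝ)) := by fun_prop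
    have : (fun σ : ℝ => ((t, σ) : ℝ × ℝ)) ⁻¹' (tsupport (fun q : ℝ × ℝ => V q.1 q.2))ᶜ ∈ nhds s :=
      hcont.continuousAt.preimage_mem_nhds hmem
    filter_upwards [this] with σ hσ
    exact image_eq_zero_of_notMem_tsupport (f := fun q : ℝ × ℝ => V q.1 q.2) hσ
  rw [ps, hev.deriv_eq, deriv_const]

/-- The support of `ps V` is contained in that of `V`. -/
lemma tsupport_ps_subset {V : ℝ → ℝ → ℝ} :
    tsupport (fun q : ℝ × ℝ => ps V q.1 q.2) ⊆ tsupport (fun q : ℝ × ℝ => V q.1 q.2) := by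
  apply closure_minimal _ (isClosed_tsupport _)
  intro q hq
  by_contra hmem
  exact hq (ps_zero hmem)

end RodAux

namespace RodAux

lemma cont_slice_s {F : ℝ → ℝ → ℝ} (hF : Continuous (fun p : ℝ × ℝ => F p.1 p.2)) (t : ℝ) :
    Continuous (fun s => F t s) := hF.comp (continuous_const.prodMk continuous_id)

lemma cont_slice_t {F : ℝ → ℝ → ℝ} (hF : Continuous (fun p : ℝ × ℝ => F p.1 p.2)) (s : ℝ) :
    Continuous (fun t => F t s) := hF.comp (continuous_id.prodMk continuous_const)

lemma cont_param {F : ℝ → ℝ → ℝ} (hF : Continuous (fun p : ℝ × ℝ => F p.1 p.2)) (c d : ℝ) :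
    Continuous (fun t => ∫ s in c..d, F t s) :=
  intervalIntegral.continuous_parametric_intervalIntegral_of_continuous' hF c d

lemma cont_param' {F : ℝ → ℝ → ℝ} (hF : Continuous (fun p : ℝ × ℝ => F p.1 p.2)) (a b : ℝ) :
    Continuous (fun s => ∫ t in a..b, F t s) := by
  have h : Continuous (Function.uncurry (fun s t => F t s)) := by
    exact hF.comp (continuous_snd.prodMk continuous_fst)
  exact intervalIntegral.continuous_parametric_intervalIntegral_of_continuous' (f := fun s t => F t s) h a b

lemma swapDI {F : ℝ → ℝ → ℝ} (hF : Continuous (fun p : ℝ × ℝ => F p.1 p.2))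
    {a b c d : ℝ} (hab : a ≤ b) (hcd : c ≤ d) :
    ∫ t in a..b, ∫ s in c..d, F t s = ∫ s in c..d, ∫ t in a..b, F t s := by
  simp_rw [intervalIntegral.integral_of_le hab, intervalIntegral.integral_of_le hcd]
  apply MeasureTheory.integral_integral_swap
  have h2 : IntegrableOn (fun p : ℝ × ℝ => F p.1 p.2) (Set.Icc a b ×ˢ Set.Icc c d) :=
    hF.continuousOn.integrableOn_compact (isCompact_Icc.prod isCompact_Icc)
  have h3 : IntegrableOn (fun p : ℝ × ℝ => F p.1 p.2) (Set.Ioc a b ×ˢ Set.Ioc c d) :=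
    h2.mono_set (Set.prod_mono Set.Ioc_subset_Icc_self Set.Ioc_subset_Icc_self)
  rw [IntegrableOn, MeasureTheory.Measure.volume_eq_prod, ← Measure.prod_restrict] at h3
  exact h3

lemma DI_congr {F G : ℝ → ℝ → ℝ} {a b c d : ℝ} (h : ∀ t s, F t s = G t s) :
    ∫ t in a..b, ∫ s in c..d, F t s = ∫ t in a..b, ∫ s in c..d, G t s := by
  simp only [h]

lemma DI_add {F G : ℝ → ℝ → ℝ} (hF : Continuous (fun p : ℝ × ℝ => F p.1 p.2))
    (hG : Continuous (fun p : ℝ × ℝ => G p.1 p.2)) {a b c d : ℝ} :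
    ∫ t in a..b, ∫ s in c..d, (F t s + G t s)
      = (∫ t in a..b, ∫ s in c..d, F t s) + ∫ t in a..b, ∫ s in c..d, G t s := by
  have h1 : ∀ t, ∫ s in c..d, (F t s + G t s)
      = (∫ s in c..d, F t s) + ∫ s in c..d, G t s := fun t =>
    intervalIntegral.integral_add ((cont_slice_s hF t).intervalIntegrable c d)
      ((cont_slice_s hG t).intervalIntegrable c d)
  simp_rw [h1]
  exact intervalIntegral.integral_add ((cont_param hF c d).intervalIntegrable a b)
    ((cont_param hG c d).intervalIntegrable a b)

lemma DI_const_mul (r : ℝ) (F : ℝ → ℝ → ℝ) {a b c d : ℝ} :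
    ∫ t in a..b, ∫ s in c..d, r * F t s = r * ∫ t in a..b, ∫ s in c..d, F t s := by
  simp_rw [intervalIntegral.integral_const_mul]

lemma ibp_s_inner {f V : ℝ → ℝ → ℝ} (hf : Smooth2 f) (hV : Smooth2 V)
    {t₀ t₁ c d : ℝ}
    (hsupp : tsupport (fun q : ℝ × ℝ => V q.1 q.2) ⊆ Set.Ioo t₀ t₁ ×ˢ Set.Ioo c d)
    (t : ℝ) :
    ∫ s in c..d, ps f t s * ps V t s = - ∫ s in c..d, ps (ps f) t s * V t s := by
  have hVc : V t c = 0 := val_zero (fun h => lt_irrefl c (hsupp h).2.1)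
  have hVd : V t d = 0 := val_zero (fun h => lt_irrefl d (hsupp h).2.2)
  have key := intervalIntegral.integral_mul_deriv_eq_deriv_mul
    (u := fun s => ps f t s) (u' := fun s => ps (ps f) t s)
    (v := fun s => V t s) (v' := fun s => ps V t s) (a := c) (b := d)
    (fun sx _ => hasDerivAt_s (smooth_ps hf) t sx)
    (fun sx _ => hasDerivAt_s hV t sx)
    ((cont_slice_s (smooth_ps (smooth_ps hf)).continuous t).intervalIntegrable c d)
    ((cont_slice_s (smooth_ps hV).continuous t).intervalIntegrable c d)
  rw [key]
  simp [hVc, hVd]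

lemma ibp_s {f V : ℝ → ℝ → ℝ} (hf : Smooth2 f) (hV : Smooth2 V)
    {t₀ t₁ c d : ℝ}
    (hsupp : tsupport (fun q : ℝ × ℝ => V q.1 q.2) ⊆ Set.Ioo t₀ t₁ ×ˢ Set.Ioo c d) :
    ∫ t in t₀..t₁, ∫ s in c..d, ps f t s * ps V t s
      = - ∫ t in t₀..t₁, ∫ s in c..d, ps (ps f) t s * V t s := by
  rw [← intervalIntegral.integral_neg]
  apply intervalIntegral.integral_congr
  intro t _
  exact ibp_s_inner hf hV hsupp t

lemma ibp_t_inner {f V : ℝ → ℝ → ℝ} (hf : Smooth2 f) (hV : Smooth2 V)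
    {t₀ t₁ c d : ℝ}
    (hsupp : tsupport (fun q : ℝ × ℝ => V q.1 q.2) ⊆ Set.Ioo t₀ t₁ ×ˢ Set.Ioo c d)
    (s : ℝ) :
    ∫ t in t₀..t₁, pt f t s * pt V t s = - ∫ t in t₀..t₁, pt (pt f) t s * V t s := by
  have hV0 : V t₀ s = 0 := val_zero (fun h => lt_irrefl t₀ (hsupp h).1.1)
  have hV1 : V t₁ s = 0 := val_zero (fun h => lt_irrefl t₁ (hsupp h).1.2)
  have key := intervalIntegral.integral_mul_deriv_eq_deriv_mul
    (u := fun t => pt f t s) (u' := fun t => pt (pt f) t s)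
    (v := fun t => V t s) (v' := fun t => pt V t s) (a := t₀) (b := t₁)
    (fun tx _ => hasDerivAt_t (smooth_pt hf) tx s)
    (fun tx _ => hasDerivAt_t hV tx s)
    ((cont_slice_t (smooth_pt (smooth_pt hf)).continuous s).intervalIntegrable t₀ t₁)
    ((cont_slice_t (smooth_pt hV).continuous s).intervalIntegrable t₀ t₁)
  rw [key]
  simp [hV0, hV1]

lemma ibp_t {f V : ℝ → ℝ → ℝ} (hf : Smooth2 f) (hV : Smooth2 V)
    {t₀ t₁ c d : ℝ} (h01 : t₀ ≤ t₁) (hcd : c ≤ d)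
    (hsupp : tsupport (fun q : ℝ × ℝ => V q.1 q.2) ⊆ Set.Ioo t₀ t₁ ×ˢ Set.Ioo c d) :
    ∫ t in t₀..t₁, ∫ s in c..d, pt f t s * pt V t s
      = - ∫ t in t₀..t₁, ∫ s in c..d, pt (pt f) t s * V t s := by
  have hc1 : Continuous (fun p : ℝ × ℝ => pt f p.1 p.2 * pt V p.1 p.2) :=
    (smooth_pt hf).continuous.mul (smooth_pt hV).continuous
  have hc2 : Continuous (fun p : ℝ × ℝ => pt (pt f) p.1 p.2 * V p.1 p.2) :=
    (smooth_pt (smooth_pt hf)).continuous.mul hV.continuous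
  rw [swapDI hc1 h01 hcd]
  have step : ∫ s in c..d, ∫ t in t₀..t₁, pt f t s * pt V t s
      = ∫ s in c..d, - ∫ t in t₀..t₁, pt (pt f) t s * V t s := by
    apply intervalIntegral.integral_congr
    intro s _
    exact ibp_t_inner hf hV hsupp s
  rw [step, intervalIntegral.integral_neg, ← swapDI hc2 h01 hcd]

end RodAux


namespace RodAux

noncomputable def firstVar (ρ α β K : ℝ) (x y θ Vx Vy Vθ : ℝ → ℝ → ℝ) : ℝ → ℝ → ℝ := fun t s =>
  ρ * (pt x t s * pt Vx t s + pt y t s * pt Vy t s) + α * (pt θ t s * pt Vθ t s)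
    - β * (ps θ t s * ps Vθ t s)
    - K * (ps (ps x) t s * ps (ps Vx) t s + ps (ps y) t s * ps (ps Vy) t s)

lemma cont_lag {ρ α β K : ℝ} {x y θ : ℝ → ℝ → ℝ}
    (hx : Smooth2 x) (hy : Smooth2 y) (hθ : Smooth2 θ) :
    Continuous (fun p : ℝ × ℝ => rodLagNH ρ α β K x y θ p.1 p.2) := by
  have h1 := (smooth_pt hx).continuous
  have h2 := (smooth_pt hy).continuous
  have h3 := (smooth_pt hθ).continuous
  have h4 := (smooth_ps hθ).continuous
  have h5 := (smooth_ps (smooth_ps hx)).continuous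
  have h6 := (smooth_ps (smooth_ps hy)).continuous
  unfold rodLagNH
  exact ((((continuous_const.mul ((h1.pow 2).add (h2.pow 2))).add
    (continuous_const.mul (h3.pow 2))).sub
    (continuous_const.mul (h4.pow 2))).sub
    (continuous_const.mul ((h5.pow 2).add (h6.pow 2))))

lemma cont_firstVar {ρ α β K : ℝ} {x y θ Vx Vy Vθ : ℝ → ℝ → ℝ}
    (hx : Smooth2 x) (hy : Smooth2 y) (hθ : Smooth2 θ)
    (hVx : Smooth2 Vx) (hVy : Smooth2 Vy) (hVθ : Smooth2 Vθ) :
    Continuous (fun p : ℝ × ℝ => firstVar ρ α β K x y θ Vx Vy Vθ p.1 p.2) := by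
  have h1 := (smooth_pt hx).continuous
  have h2 := (smooth_pt hy).continuous
  have h3 := (smooth_pt hθ).continuous
  have h4 := (smooth_ps hθ).continuous
  have h5 := (smooth_ps (smooth_ps hx)).continuous
  have h6 := (smooth_ps (smooth_ps hy)).continuous
  have g1 := (smooth_pt hVx).continuous
  have g2 := (smooth_pt hVy).continuous
  have g3 := (smooth_pt hVθ).continuous
  have g4 := (smooth_ps hVθ).continuous
  have g5 := (smooth_ps (smooth_ps hVx)).continuous
  have g6 := (smooth_ps (smooth_ps hVy)).continuous
  unfold firstVar
  exact ((((continuous_const.mul ((h1.mul g1).add (h2.mul g2))).add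
    (continuous_const.mul (h3.mul g3))).sub
    (continuous_const.mul (h4.mul g4))).sub
    (continuous_const.mul ((h5.mul g5).add (h6.mul g6))))

lemma pert_lag {ρ α β K : ℝ} {x y θ Vx Vy Vθ : ℝ → ℝ → ℝ}
    (hx : Smooth2 x) (hy : Smooth2 y) (hθ : Smooth2 θ)
    (hVx : Smooth2 Vx) (hVy : Smooth2 Vy) (hVθ : Smooth2 Vθ) (ε t s : ℝ) :
    rodLagNH ρ α β K
        (fun t' s' => x t' s' + ε * Vx t' s')
        (fun t' s' => y t' s' + ε * Vy t' s')
        (fun t' s' => θ t' s' + ε * Vθ t' s') t s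
      = rodLagNH ρ α β K x y θ t s + ε * firstVar ρ α β K x y θ Vx Vy Vθ t s
        + ε ^ 2 * rodLagNH ρ α β K Vx Vy Vθ t s := by
  unfold rodLagNH firstVar
  rw [pt_add_smul hx hVx ε, pt_add_smul hy hVy ε, pt_add_smul hθ hVθ ε,
    ps_add_smul hθ hVθ ε, psps_add_smul hx hVx ε, psps_add_smul hy hVy ε]
  ring

lemma action_hasDerivAt {ρ α β K : ℝ} {x y θ Vx Vy Vθ : ℝ → ℝ → ℝ}
    (hx : Smooth2 x) (hy : Smooth2 y) (hθ : Smooth2 θ)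
    (hVx : Smooth2 Vx) (hVy : Smooth2 Vy) (hVθ : Smooth2 Vθ)
    (t₀ t₁ c d : ℝ) :
    HasDerivAt (fun ε : ℝ =>
        ∫ t in t₀..t₁, ∫ s in c..d,
          rodLagNH ρ α β K
            (fun t' s' => x t' s' + ε * Vx t' s')
            (fun t' s' => y t' s' + ε * Vy t' s')
            (fun t' s' => θ t' s' + ε * Vθ t' s') t s)
      (∫ t in t₀..t₁, ∫ s in c..d, firstVar ρ α β K x y θ Vx Vy Vθ t s) 0 := by
  set A := ∫ t in t₀..t₁, ∫ s in c..d, rodLagNH ρ α β K x y θ t s with hA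
  set B := ∫ t in t₀..t₁, ∫ s in c..d, firstVar ρ α β K x y θ Vx Vy Vθ t s with hB
  set C := ∫ t in t₀..t₁, ∫ s in c..d, rodLagNH ρ α β K Vx Vy Vθ t s with hC
  have hfun : (fun ε : ℝ =>
      ∫ t in t₀..t₁, ∫ s in c..d,
        rodLagNH ρ α β K
          (fun t' s' => x t' s' + ε * Vx t' s')
          (fun t' s' => y t' s' + ε * Vy t' s')
          (fun t' s' => θ t' s' + ε * Vθ t' s') t s)
      = fun ε : ℝ => A + (ε * B + ε ^ 2 * C) := by
    funext ε
    have step1 : ∫ t in t₀..t₁, ∫ s in c..d,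
        rodLagNH ρ α β K
          (fun t' s' => x t' s' + ε * Vx t' s')
          (fun t' s' => y t' s' + ε * Vy t' s')
          (fun t' s' => θ t' s' + ε * Vθ t' s') t s
        = ∫ t in t₀..t₁, ∫ s in c..d,
            (rodLagNH ρ α β K x y θ t s
              + (ε * firstVar ρ α β K x y θ Vx Vy Vθ t s
                + ε ^ 2 * rodLagNH ρ α β K Vx Vy Vθ t s)) := by
      apply DI_congr
      intro t s
      rw [pert_lag hx hy hθ hVx hVy hVθ ε t s]; ring
    rw [step1]
    rw [DI_add (cont_lag hx hy hθ)
      ((continuous_const.mul (cont_firstVar hx hy hθ hVx hVy hVθ)).add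
        (continuous_const.mul (cont_lag hVx hVy hVθ)))]
    rw [DI_add (continuous_const.mul (cont_firstVar hx hy hθ hVx hVy hVθ))
      (continuous_const.mul (cont_lag hVx hVy hVθ))]
    rw [DI_const_mul ε, DI_const_mul (ε ^ 2)]
  rw [hfun]
  have h1 : HasDerivAt (fun ε : ℝ => ε * B) ((1 : ℝ) * B) 0 := (hasDerivAt_id 0).mul_const B
  have h2 : HasDerivAt (fun ε : ℝ => ε ^ 2 * C) (((2 : ℕ) * (0 : ℝ) ^ (2 - 1)) * C) 0 :=
    (hasDerivAt_pow 2 0).mul_const C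
  have h3 := (hasDerivAt_const (0 : ℝ) A).add (h1.add h2)
  exact h3.congr_deriv (by simp)

end RodAux

namespace RodAux

lemma fundamental {E : ℝ → ℝ → ℝ} (hE : Continuous (fun p : ℝ × ℝ => E p.1 p.2))
    {t₀ t₁ c d : ℝ}
    (h : ∀ V : ℝ → ℝ → ℝ, Smooth2 V →
      tsupport (fun q : ℝ × ℝ => V q.1 q.2) ⊆ Set.Ioo t₀ t₁ ×ˢ Set.Ioo c d →
      (∫ t in t₀..t₁, ∫ s in c..d, E t s * V t s) = 0)
    {t s : ℝ} (ht : t ∈ Set.Ioo t₀ t₁) (hs : s ∈ Set.Ioo c d) : E t s = 0 := by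
  by_contra hne
  have h01 : t₀ < t₁ := lt_trans ht.1 ht.2
  have hcd : c < d := lt_trans hs.1 hs.2
  set cE := E t s with hcE
  have hcEpos : 0 < |cE| := abs_pos.mpr hne
  obtain ⟨δ₀, hδ₀, hδball⟩ := Metric.continuousAt_iff.mp hE.continuousAt (|cE| / 2) (by positivity)
  set δ : ℝ := min δ₀ (min (min (t - t₀) (t₁ - t)) (min (s - c) (d - s))) / 2 with hδdef
  have hδpos : 0 < δ := by
    apply div_pos _ (by norm_num)
    exact lt_min hδ₀ (lt_min (lt_min (by linarith [ht.1]) (by linarith [ht.2]))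
      (lt_min (by linarith [hs.1]) (by linarith [hs.2])))
  have hδlt : δ < δ₀ := by
    have h1 : min δ₀ (min (min (t - t₀) (t₁ - t)) (min (s - c) (d - s))) ≤ δ₀ := min_le_left _ _
    simp only [hδdef]; linarith
  have hδt0 : δ < t - t₀ := by
    have : min δ₀ (min (min (t - t₀) (t₁ - t)) (min (s - c) (d - s))) ≤ t - t₀ :=
      le_trans (min_le_right _ _) (le_trans (min_le_left _ _) (min_le_left _ _))
    simp only [hδdef]; linarith
  have hδt1 : δ < t₁ - t := by
    have : min δ₀ (min (min (t - t₀) (t₁ - t)) (min (s - c) (d - s))) ≤ t₁ - t :=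
      le_trans (min_le_right _ _) (le_trans (min_le_left _ _) (min_le_right _ _))
    simp only [hδdef]; linarith
  have hδsc : δ < s - c := by
    have : min δ₀ (min (min (t - t₀) (t₁ - t)) (min (s - c) (d - s))) ≤ s - c :=
      le_trans (min_le_right _ _) (le_trans (min_le_right _ _) (min_le_left _ _))
    simp only [hδdef]; linarith
  have hδsd : δ < d - s := by
    have : min δ₀ (min (min (t - t₀) (t₁ - t)) (min (s - c) (d - s))) ≤ d - s :=
      le_trans (min_le_right _ _) (le_trans (min_le_right _ _) (min_le_right _ _))
    simp only [hδdef]; linarith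
  -- sign is locked on the box
  have hbox : ∀ u v : ℝ, |u - t| ≤ δ → |v - s| ≤ δ → 0 < cE * E u v := by
    intro u v hu hv
    have hdist : dist ((u, v) : ℝ × ℝ) (t, s) < δ₀ := by
      rw [Prod.dist_eq]
      apply lt_of_le_of_lt (max_le _ _) hδlt
      · rw [Real.dist_eq]; exact hu
      · rw [Real.dist_eq]; exact hv
    have hb := hδball hdist
    have hb' : |E u v - cE| < |cE| / 2 := by
      simpa [Real.dist_eq] using hb
    have h1 := neg_abs_le (cE * (E u v - cE))
    have h2 : |cE * (E u v - cE)| = |cE| * |E u v - cE| := abs_mul _ _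
    nlinarith [sq_abs cE, abs_nonneg cE, abs_nonneg (E u v - cE)]
  -- bump functions
  set φt : ContDiffBump t := ⟨δ / 2, δ, by positivity, by linarith⟩ with hφt
  set φs : ContDiffBump s := ⟨δ / 2, δ, by positivity, by linarith⟩ with hφs
  set V : ℝ → ℝ → ℝ := fun u v => φt u * φs v with hV
  have hVsm : Smooth2 V := (φt.contDiff.comp contDiff_fst).mul (φs.contDiff.comp contDiff_snd)
  have hVnn : ∀ u v, 0 ≤ V u v := fun u v => mul_nonneg φt.nonneg φs.nonneg
  have hVsupp : tsupport (fun q : ℝ × ℝ => V q.1 q.2) ⊆ Set.Ioo t₀ t₁ ×ˢ Set.Ioo c d := by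
    have hsub : Function.support (fun q : ℝ × ℝ => V q.1 q.2)
        ⊆ Metric.ball t δ ×ˢ Metric.ball s δ := by
      intro q hq
      simp only [Function.mem_support, hV] at hq
      constructor
      · have : φt q.1 ≠ 0 := fun h0 => hq (by rw [h0]; ring)
        have := Function.mem_support.mpr this
        rwa [φt.support_eq] at this
      · have : φs q.2 ≠ 0 := fun h0 => hq (by rw [h0]; ring)
        have := Function.mem_support.mpr this
        rwa [φs.support_eq] at this
    have hclose : tsupport (fun q : ℝ × ℝ => V q.1 q.2)
        ⊆ Metric.closedBall t δ ×ˢ Metric.closedBall s δ := by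
      apply closure_minimal (hsub.trans (Set.prod_mono Metric.ball_subset_closedBall
        Metric.ball_subset_closedBall))
      exact (Metric.isClosed_closedBall).prod (Metric.isClosed_closedBall)
    intro q hq
    have := hclose hq
    constructor
    · have h1 : |q.1 - t| ≤ δ := by
        have := this.1; rwa [Metric.mem_closedBall, Real.dist_eq] at this
      rcases abs_le.mp h1 with ⟨ha, hb⟩
      exact ⟨by linarith, by linarith⟩
    · have h2 : |q.2 - s| ≤ δ := by
        have := this.2; rwa [Metric.mem_closedBall, Real.dist_eq] at this
      rcases abs_le.mp h2 with ⟨ha, hb⟩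
      exact ⟨by linarith, by linarith⟩
  -- pointwise nonnegativity of cE * (E * V)
  have hnn : ∀ u v : ℝ, 0 ≤ cE * (E u v * V u v) := by
    intro u v
    by_cases hV0 : V u v = 0
    · rw [hV0]; ring_nf; exact le_refl 0
    · have hφt0 : φt u ≠ 0 := fun h0 => hV0 (by simp only [hV]; rw [h0]; ring)
      have hφs0 : φs v ≠ 0 := fun h0 => hV0 (by simp only [hV]; rw [h0]; ring)
      have hu : |u - t| ≤ δ := by
        have := Function.mem_support.mpr hφt0
        rw [φt.support_eq, Metric.mem_ball, Real.dist_eq] at this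
        exact le_of_lt this
      have hv : |v - s| ≤ δ := by
        have := Function.mem_support.mpr hφs0
        rw [φs.support_eq, Metric.mem_ball, Real.dist_eq] at this
        exact le_of_lt this
      have := hbox u v hu hv
      have := hVnn u v
      nlinarith
  -- continuity
  have hcEV : Continuous (fun p : ℝ × ℝ => cE * (E p.1 p.2 * V p.1 p.2)) :=
    continuous_const.mul (hE.mul hVsm.continuous)
  -- positivity of the double integral
  have hpos : 0 < ∫ u in t₀..t₁, ∫ v in c..d, cE * (E u v * V u v) := by
    apply intervalIntegral.integral_pos h01
    · exact (cont_param (F := fun u v => cE * (E u v * V u v)) hcEV c d).continuousOn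
    · intro u _
      exact intervalIntegral.integral_nonneg (le_of_lt hcd) (fun v _ => hnn u v)
    · refine ⟨t, ⟨le_of_lt ht.1, le_of_lt ht.2⟩, ?_⟩
      apply intervalIntegral.integral_pos hcd
      · exact (cont_slice_s (F := fun u v => cE * (E u v * V u v)) hcEV t).continuousOn
      · intro v _; exact hnn t v
      · refine ⟨s, ⟨le_of_lt hs.1, le_of_lt hs.2⟩, ?_⟩
        have hφt1 : φt t = 1 := φt.one_of_mem_closedBall (by
          simp [Metric.mem_closedBall, dist_self]; positivity)
        have hφs1 : φs s = 1 := φs.one_of_mem_closedBall (by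
          simp [Metric.mem_closedBall, dist_self]; positivity)
        have hb := hbox t s (by simp [abs_of_nonneg, hδpos.le]) (by simp [hδpos.le])
        simp only [hV, hφt1, hφs1, mul_one]
        exact hb
  have hzero := h V hVsm hVsupp
  rw [DI_const_mul cE (fun u v => E u v * V u v)] at hpos
  rw [hzero] at hpos
  simp at hpos

end RodAux

namespace RodAux

lemma tsupport_aux {W V : ℝ → ℝ → ℝ} (h : ∀ t s, V t s = 0 → W t s = 0) :
    tsupport (fun q : ℝ × ℝ => W q.1 q.2) ⊆ tsupport (fun q : ℝ × ℝ => V q.1 q.2) := by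
  apply closure_minimal _ (isClosed_tsupport _)
  intro q hq
  apply subset_closure
  simp only [Function.mem_support] at hq ⊢
  exact fun h0 => hq (h q.1 q.2 h0)

lemma ibp_ss {f V : ℝ → ℝ → ℝ} (hf : Smooth2 f) (hV : Smooth2 V)
    {t₀ t₁ c d : ℝ}
    (hsupp : tsupport (fun q : ℝ × ℝ => V q.1 q.2) ⊆ Set.Ioo t₀ t₁ ×ˢ Set.Ioo c d) :
    ∫ t in t₀..t₁, ∫ s in c..d, ps (ps f) t s * ps (ps V) t s
      = ∫ t in t₀..t₁, ∫ s in c..d, ps (ps (ps (ps f))) t s * V t s := by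
  have hsupp' : tsupport (fun q : ℝ × ℝ => ps V q.1 q.2) ⊆ Set.Ioo t₀ t₁ ×ˢ Set.Ioo c d :=
    (tsupport_ps_subset).trans hsupp
  have h1 := ibp_s (smooth_ps hf) (smooth_ps hV) hsupp'
  have h2 := ibp_s (smooth_ps (smooth_ps hf)) hV hsupp
  rw [h1, h2, neg_neg]

lemma DI_sum6 {F1 F2 F3 F4 F5 F6 : ℝ → ℝ → ℝ}
    (h1 : Continuous (fun p : ℝ × ℝ => F1 p.1 p.2))
    (h2 : Continuous (fun p : ℝ × ℝ => F2 p.1 p.2))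
    (h3 : Continuous (fun p : ℝ × ℝ => F3 p.1 p.2))
    (h4 : Continuous (fun p : ℝ × ℝ => F4 p.1 p.2))
    (h5 : Continuous (fun p : ℝ × ℝ => F5 p.1 p.2))
    (h6 : Continuous (fun p : ℝ × ℝ => F6 p.1 p.2))
    (c1 c2 c3 c4 c5 c6 : ℝ) {a b c d : ℝ} :
    (∫ t in a..b, ∫ s in c..d,
      (c1 * F1 t s + (c2 * F2 t s + (c3 * F3 t s
        + (c4 * F4 t s + (c5 * F5 t s + c6 * F6 t s))))))
      = c1 * (∫ t in a..b, ∫ s in c..d, F1 t s)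
        + (c2 * (∫ t in a..b, ∫ s in c..d, F2 t s)
        + (c3 * (∫ t in a..b, ∫ s in c..d, F3 t s)
        + (c4 * (∫ t in a..b, ∫ s in c..d, F4 t s)
        + (c5 * (∫ t in a..b, ∫ s in c..d, F5 t s)
        + (c6 * (∫ t in a..b, ∫ s in c..d, F6 t s)))))) := by
  have k1 : Continuous (fun p : ℝ × ℝ => c1 * F1 p.1 p.2) := continuous_const.mul h1
  have k2 : Continuous (fun p : ℝ × ℝ => c2 * F2 p.1 p.2) := continuous_const.mul h2
  have k3 : Continuous (fun p : ℝ × ℝ => c3 * F3 p.1 p.2) := continuous_const.mul h3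
  have k4 : Continuous (fun p : ℝ × ℝ => c4 * F4 p.1 p.2) := continuous_const.mul h4
  have k5 : Continuous (fun p : ℝ × ℝ => c5 * F5 p.1 p.2) := continuous_const.mul h5
  have k6 : Continuous (fun p : ℝ × ℝ => c6 * F6 p.1 p.2) := continuous_const.mul h6
  rw [DI_add k1 (k2.add (k3.add (k4.add (k5.add k6)))),
    DI_add k2 (k3.add (k4.add (k5.add k6))),
    DI_add k3 (k4.add (k5.add k6)),
    DI_add k4 (k5.add k6),
    DI_add k5 k6,
    DI_const_mul c1, DI_const_mul c2, DI_const_mul c3, DI_const_mul c4,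
    DI_const_mul c5, DI_const_mul c6]

/-- First variation after integration by parts. -/
lemma bval {ρ α β K : ℝ} {x y θ Vx Vy Vθ : ℝ → ℝ → ℝ}
    (hx : Smooth2 x) (hy : Smooth2 y) (hθ : Smooth2 θ)
    (hVx : Smooth2 Vx) (hVy : Smooth2 Vy) (hVθ : Smooth2 Vθ)
    {t₀ t₁ c d : ℝ} (h01 : t₀ ≤ t₁) (hcd : c ≤ d)
    (hsx : tsupport (fun q : ℝ × ℝ => Vx q.1 q.2) ⊆ Set.Ioo t₀ t₁ ×ˢ Set.Ioo c d)
    (hsy : tsupport (fun q : ℝ × ℝ => Vy q.1 q.2) ⊆ Set.Ioo t₀ t₁ ×ˢ Set.Ioo c d)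
    (hsθ : tsupport (fun q : ℝ × ℝ => Vθ q.1 q.2) ⊆ Set.Ioo t₀ t₁ ×ˢ Set.Ioo c d) :
    (∫ t in t₀..t₁, ∫ s in c..d, firstVar ρ α β K x y θ Vx Vy Vθ t s)
      = - ∫ t in t₀..t₁, ∫ s in c..d,
          ((ρ * pt (pt x) t s + K * ps (ps (ps (ps x))) t s) * Vx t s
            + (ρ * pt (pt y) t s + K * ps (ps (ps (ps y))) t s) * Vy t s
            + (α * pt (pt θ) t s - β * ps (ps θ) t s) * Vθ t s) := by
  -- continuity of the atoms
  have a1 : Continuous (fun p : ℝ × ℝ => pt x p.1 p.2 * pt Vx p.1 p.2) :=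
    (smooth_pt hx).continuous.mul (smooth_pt hVx).continuous
  have a2 : Continuous (fun p : ℝ × ℝ => pt y p.1 p.2 * pt Vy p.1 p.2) :=
    (smooth_pt hy).continuous.mul (smooth_pt hVy).continuous
  have a3 : Continuous (fun p : ℝ × ℝ => pt θ p.1 p.2 * pt Vθ p.1 p.2) :=
    (smooth_pt hθ).continuous.mul (smooth_pt hVθ).continuous
  have a4 : Continuous (fun p : ℝ × ℝ => ps θ p.1 p.2 * ps Vθ p.1 p.2) :=
    (smooth_ps hθ).continuous.mul (smooth_ps hVθ).continuous
  have a5 : Continuous (fun p : ℝ × ℝ => ps (ps x) p.1 p.2 * ps (ps Vx) p.1 p.2) :=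
    (smooth_ps (smooth_ps hx)).continuous.mul (smooth_ps (smooth_ps hVx)).continuous
  have a6 : Continuous (fun p : ℝ × ℝ => ps (ps y) p.1 p.2 * ps (ps Vy) p.1 p.2) :=
    (smooth_ps (smooth_ps hy)).continuous.mul (smooth_ps (smooth_ps hVy)).continuous
  have b1 : Continuous (fun p : ℝ × ℝ => pt (pt x) p.1 p.2 * Vx p.1 p.2) :=
    (smooth_pt (smooth_pt hx)).continuous.mul hVx.continuous
  have b2 : Continuous (fun p : ℝ × ℝ => pt (pt y) p.1 p.2 * Vy p.1 p.2) :=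
    (smooth_pt (smooth_pt hy)).continuous.mul hVy.continuous
  have b3 : Continuous (fun p : ℝ × ℝ => pt (pt θ) p.1 p.2 * Vθ p.1 p.2) :=
    (smooth_pt (smooth_pt hθ)).continuous.mul hVθ.continuous
  have b4 : Continuous (fun p : ℝ × ℝ => ps (ps θ) p.1 p.2 * Vθ p.1 p.2) :=
    (smooth_ps (smooth_ps hθ)).continuous.mul hVθ.continuous
  have b5 : Continuous
      (fun p : ℝ × ℝ => ps (ps (ps (ps x))) p.1 p.2 * Vx p.1 p.2) :=
    (smooth_ps (smooth_ps (smooth_ps (smooth_ps hx)))).continuous.mul hVx.continuous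
  have b6 : Continuous
      (fun p : ℝ × ℝ => ps (ps (ps (ps y))) p.1 p.2 * Vy p.1 p.2) :=
    (smooth_ps (smooth_ps (smooth_ps (smooth_ps hy)))).continuous.mul hVy.continuous
  -- expand the left side
  have lhs1 : (∫ t in t₀..t₁, ∫ s in c..d, firstVar ρ α β K x y θ Vx Vy Vθ t s)
      = ∫ t in t₀..t₁, ∫ s in c..d,
          (ρ * (pt x t s * pt Vx t s) + (ρ * (pt y t s * pt Vy t s)
            + (α * (pt θ t s * pt Vθ t s) + ((-β) * (ps θ t s * ps Vθ t s)
            + ((-K) * (ps (ps x) t s * ps (ps Vx) t s)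
              + (-K) * (ps (ps y) t s * ps (ps Vy) t s)))))) := by
    apply DI_congr
    intro t s
    unfold firstVar
    ring
  rw [lhs1, DI_sum6 a1 a2 a3 a4 a5 a6 ρ ρ α (-β) (-K) (-K)]
  -- expand the right side
  have rhs1 : (∫ t in t₀..t₁, ∫ s in c..d,
        ((ρ * pt (pt x) t s + K * ps (ps (ps (ps x))) t s) * Vx t s
          + (ρ * pt (pt y) t s + K * ps (ps (ps (ps y))) t s) * Vy t s
          + (α * pt (pt θ) t s - β * ps (ps θ) t s) * Vθ t s))
      = ∫ t in t₀..t₁, ∫ s in c..d,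
          (ρ * (pt (pt x) t s * Vx t s) + (ρ * (pt (pt y) t s * Vy t s)
            + (α * (pt (pt θ) t s * Vθ t s) + ((-β) * (ps (ps θ) t s * Vθ t s)
            + (K * (ps (ps (ps (ps x))) t s * Vx t s)
              + K * (ps (ps (ps (ps y))) t s * Vy t s)))))) := by
    apply DI_congr
    intro t s
    ring
  rw [rhs1, DI_sum6 b1 b2 b3 b4 b5 b6 ρ ρ α (-β) K K]
  -- apply integration by parts on the six atoms
  rw [ibp_t hx hVx h01 hcd hsx, ibp_t hy hVy h01 hcd hsy, ibp_t hθ hVθ h01 hcd hsθ,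
    ibp_s hθ hVθ hsθ, ibp_ss hx hVx hsx, ibp_ss hy hVy hsy]
  ring

end RodAux

open RodAux in
/-- the Lagrange–d'Alembert principle for the nonholonomic planar Cosserat
rod: stationarity under admissible (Chetaev) variations is equivalent to the nonholonomic
field equations with multipliers. -/
theorem nonholonomic_rod_dAlembert_principle
    (ρ α β K R ℓ : ℝ) (hρ : 0 < ρ) (hα : 0 < α) (hβ : 0 < β) (hK : 0 < K) (hR : 0 < R)
    (hℓ : 0 < ℓ) (t₀ t₁ : ℝ) (ht : t₀ < t₁)
    (x y θ : ℝ → ℝ → ℝ) (hx : Smooth2 x) (hy : Smooth2 y) (hθ : Smooth2 θ)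
    (hc1 : ∀ t : ℝ, ∀ s ∈ Set.Icc (0 : ℝ) ℓ, pt x t s + R * pt θ t s * ps y t s = 0)
    (hc2 : ∀ t : ℝ, ∀ s ∈ Set.Icc (0 : ℝ) ℓ, pt y t s - R * pt θ t s * ps x t s = 0) :
    ((∀ Vx Vy Vθ : ℝ → ℝ → ℝ, Smooth2 Vx → Smooth2 Vy → Smooth2 Vθ →
        tsupport (fun q : ℝ × ℝ => Vx q.1 q.2) ⊆ Set.Ioo t₀ t₁ ×ˢ Set.Ioo (0 : ℝ) ℓ →
        tsupport (fun q : ℝ × ℝ => Vy q.1 q.2) ⊆ Set.Ioo t₀ t₁ ×ˢ Set.Ioo (0 : ℝ) ℓ →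
        tsupport (fun q : ℝ × ℝ => Vθ q.1 q.2) ⊆ Set.Ioo t₀ t₁ ×ˢ Set.Ioo (0 : ℝ) ℓ →
        (∀ t s : ℝ, Vx t s + R * ps y t s * Vθ t s = 0) →
        (∀ t s : ℝ, Vy t s - R * ps x t s * Vθ t s = 0) →
        HasDerivAt (fun ε : ℝ =>
          ∫ t in t₀..t₁, ∫ s in (0 : ℝ)..ℓ,
            rodLagNH ρ α β K
              (fun t' s' => x t' s' + ε * Vx t' s')
              (fun t' s' => y t' s' + ε * Vy t' s')
              (fun t' s' => θ t' s' + ε * Vθ t' s') t s) 0 0)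
      ↔ (∃ lam mu : ℝ → ℝ → ℝ,
          ContDiffOn ℝ (⊤ : ℕ∞) (fun q : ℝ × ℝ => lam q.1 q.2)
            (Set.Ioo t₀ t₁ ×ˢ Set.Ioo (0 : ℝ) ℓ) ∧
          ContDiffOn ℝ (⊤ : ℕ∞) (fun q : ℝ × ℝ => mu q.1 q.2)
            (Set.Ioo t₀ t₁ ×ˢ Set.Ioo (0 : ℝ) ℓ) ∧
          ∀ t ∈ Set.Ioo t₀ t₁, ∀ s ∈ Set.Ioo (0 : ℝ) ℓ,
            ρ * pt (pt x) t s + K * ps (ps (ps (ps x))) t s = lam t s ∧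
            ρ * pt (pt y) t s + K * ps (ps (ps (ps y))) t s = mu t s ∧
            α * pt (pt θ) t s - β * ps (ps θ) t s
              = R * (lam t s * ps y t s - mu t s * ps x t s))) := by
  -- intrinsic multipliers and Euler–Lagrange defect
  have hlam0sm : Smooth2 (fun t s => ρ * pt (pt x) t s + K * ps (ps (ps (ps x))) t s) :=
    (contDiff_const.mul (smooth_pt (smooth_pt hx))).add
      (contDiff_const.mul (smooth_ps (smooth_ps (smooth_ps (smooth_ps hx)))))
  have hmu0sm : Smooth2 (fun t s => ρ * pt (pt y) t s + K * ps (ps (ps (ps y))) t s) :=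
    (contDiff_const.mul (smooth_pt (smooth_pt hy))).add
      (contDiff_const.mul (smooth_ps (smooth_ps (smooth_ps (smooth_ps hy)))))
  have hE0cont : Continuous (fun p : ℝ × ℝ =>
      (fun t s => (α * pt (pt θ) t s - β * ps (ps θ) t s)
        - R * ((ρ * pt (pt x) t s + K * ps (ps (ps (ps x))) t s) * ps y t s
          - (ρ * pt (pt y) t s + K * ps (ps (ps (ps y))) t s) * ps x t s)) p.1 p.2) := by
    have h1 := (smooth_pt (smooth_pt hθ)).continuous
    have h2 := (smooth_ps (smooth_ps hθ)).continuous
    have h3 := hlam0sm.continuous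
    have h4 := hmu0sm.continuous
    have h5 := (smooth_ps hy).continuous
    have h6 := (smooth_ps hx).continuous
    exact ((continuous_const.mul h1).sub (continuous_const.mul h2)).sub
      (continuous_const.mul ((h3.mul h5).sub (h4.mul h6)))
  constructor
  · -- stationarity → multipliers
    intro hstat
    refine ⟨fun t s => ρ * pt (pt x) t s + K * ps (ps (ps (ps x))) t s,
      fun t s => ρ * pt (pt y) t s + K * ps (ps (ps (ps y))) t s,
      hlam0sm.contDiffOn, hmu0sm.contDiffOn, ?_⟩
    intro t ht' s hs'
    refine ⟨rfl, rfl, ?_⟩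
    have hkey : ∀ V : ℝ → ℝ → ℝ, Smooth2 V →
        tsupport (fun q : ℝ × ℝ => V q.1 q.2) ⊆ Set.Ioo t₀ t₁ ×ˢ Set.Ioo (0 : ℝ) ℓ →
        (∫ u in t₀..t₁, ∫ v in (0:ℝ)..ℓ,
          ((fun t s => (α * pt (pt θ) t s - β * ps (ps θ) t s)
            - R * ((ρ * pt (pt x) t s + K * ps (ps (ps (ps x))) t s) * ps y t s
              - (ρ * pt (pt y) t s + K * ps (ps (ps (ps y))) t s) * ps x t s)) u v) * V u v) = 0 := by
      intro V hVsm hVsupp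
      have hVxsm : Smooth2 (fun t s => -(R * ps y t s * V t s)) :=
        ((contDiff_const.mul (smooth_ps hy)).mul hVsm).neg
      have hVysm : Smooth2 (fun t s => R * ps x t s * V t s) :=
        (contDiff_const.mul (smooth_ps hx)).mul hVsm
      have hsx : tsupport (fun q : ℝ × ℝ => (fun t s => -(R * ps y t s * V t s)) q.1 q.2)
          ⊆ Set.Ioo t₀ t₁ ×ˢ Set.Ioo (0 : ℝ) ℓ :=
        (tsupport_aux (W := fun t s => -(R * ps y t s * V t s)) (V := V)
          (fun t s h0 => by simp [h0])).trans hVsupp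
      have hsy : tsupport (fun q : ℝ × ℝ => (fun t s => R * ps x t s * V t s) q.1 q.2)
          ⊆ Set.Ioo t₀ t₁ ×ˢ Set.Ioo (0 : ℝ) ℓ :=
        (tsupport_aux (W := fun t s => R * ps x t s * V t s) (V := V)
          (fun t s h0 => by simp [h0])).trans hVsupp
      have hd0 := hstat _ _ V hVxsm hVysm hVsm hsx hsy hVsupp
        (fun t s => by ring) (fun t s => by ring)
      have hd1 := action_hasDerivAt (ρ := ρ) (α := α) (β := β) (K := K)
        hx hy hθ hVxsm hVysm hVsm t₀ t₁ 0 ℓ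
      have hB := hd1.unique hd0
      rw [bval hx hy hθ hVxsm hVysm hVsm ht.le hℓ.le hsx hsy hVsupp] at hB
      have hcongr : (∫ u in t₀..t₁, ∫ v in (0:ℝ)..ℓ,
          ((fun t s => (α * pt (pt θ) t s - β * ps (ps θ) t s)
            - R * ((ρ * pt (pt x) t s + K * ps (ps (ps (ps x))) t s) * ps y t s
              - (ρ * pt (pt y) t s + K * ps (ps (ps (ps y))) t s) * ps x t s)) u v) * V u v)
          = ∫ u in t₀..t₁, ∫ v in (0:ℝ)..ℓ,
              ((ρ * pt (pt x) u v + K * ps (ps (ps (ps x))) u v)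
                  * (fun t s => -(R * ps y t s * V t s)) u v
                + (ρ * pt (pt y) u v + K * ps (ps (ps (ps y))) u v)
                  * (fun t s => R * ps x t s * V t s) u v
                + (α * pt (pt θ) u v - β * ps (ps θ) u v) * V u v) := by
        apply DI_congr
        intro u v
        simp only []
        ring
      rw [hcongr]
      linarith [hB]
    have hE := fundamental hE0cont hkey ht' hs'
    show α * pt (pt θ) t s - β * ps (ps θ) t s
      = R * ((ρ * pt (pt x) t s + K * ps (ps (ps (ps x))) t s) * ps y t s
        - (ρ * pt (pt y) t s + K * ps (ps (ps (ps y))) t s) * ps x t s)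
    linarith [hE]
  · -- multipliers → stationarity
    rintro ⟨lam, mu, _, _, heqs⟩
    intro Vx Vy Vθ hVxs hVys hVθs hsx hsy hsθ had1 had2
    have hd1 := action_hasDerivAt (ρ := ρ) (α := α) (β := β) (K := K)
      hx hy hθ hVxs hVys hVθs t₀ t₁ 0 ℓ
    have hB : (∫ t in t₀..t₁, ∫ s in (0:ℝ)..ℓ, firstVar ρ α β K x y θ Vx Vy Vθ t s) = 0 := by
      rw [bval hx hy hθ hVxs hVys hVθs ht.le hℓ.le hsx hsy hsθ]
      have hz : (∫ t in t₀..t₁, ∫ s in (0:ℝ)..ℓ,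
          ((ρ * pt (pt x) t s + K * ps (ps (ps (ps x))) t s) * Vx t s
            + (ρ * pt (pt y) t s + K * ps (ps (ps (ps y))) t s) * Vy t s
            + (α * pt (pt θ) t s - β * ps (ps θ) t s) * Vθ t s))
          = ∫ t in t₀..t₁, ∫ s in (0:ℝ)..ℓ, (0 : ℝ) := by
        apply DI_congr
        intro t s
        have hVxe : Vx t s = -(R * ps y t s * Vθ t s) := by linarith [had1 t s]
        have hVye : Vy t s = R * ps x t s * Vθ t s := by linarith [had2 t s]
        by_cases hin : (t, s) ∈ Set.Ioo t₀ t₁ ×ˢ Set.Ioo (0 : ℝ) ℓ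
        · obtain ⟨h1, h2, h3⟩ := heqs t hin.1 s hin.2
          rw [hVxe, hVye, h1, h2, h3]
          ring
        · have hVθ0 : Vθ t s = 0 := val_zero (fun hmem => hin (hsθ hmem))
          rw [hVxe, hVye, hVθ0]
          ring
      rw [hz]
      simp
    rw [hB] at hd1
    exact hd1
end

section
/- Let m, k be natural numbers with 1 ≤ k ≤ m, let L_d : (ℝ^m)^6 → ℝ be continuously differentiable, let φ : ℤ × ℤ → ℝ^m be a discrete field, and for each (n, i) ∈ ℤ × ℤ let Φ^1_{(n,i)}, …, Φ^k_{(n,i)} ∈ ℝ^m be linearly independent vectors (the discrete reaction forces evaluated along φ). With c_{(n,i)}(φ) and E_{(n,i)}(φ) the discrete cell values and discrete Euler–Lagrange expression, the following are equivalent: (i) for every finitely supported δ : ℤ × ℤ → ℝ^m satisfying ⟨ δ(n, i), Φ^α_{(n,i)} ⟩ = 0 for all (n, i) and α = 1,…,k, one has Σ_{(n,i)} ⟨ δ(n, i), E_{(n,i)}(φ) ⟩ = 0; (ii) there exist functions λ_1, …, λ_k : ℤ × ℤ → ℝ such that E_{(n,i)}(φ) = Σ_{α=1}^{k} λ_α(n,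 i) Φ^α_{(n,i)} for all (n, i) ∈ ℤ × ℤ. -/
/-- The values of a discrete field on the 6-cell centered at `(n, i)`:
`((n, i−1), (n, i), (n, i+1), (n+1, i−1), (n+1, i), (n+1, i+1))`. -/
def cellVals {m : ℕ} (φ : ℤ × ℤ → Fin m → ℝ) (p : ℤ × ℤ) : Fin 6 → Fin m → ℝ :=
  ![φ (p.1, p.2 - 1), φ (p.1, p.2), φ (p.1, p.2 + 1),
    φ (p.1 + 1, p.2 - 1), φ (p.1 + 1, p.2), φ (p.1 + 1, p.2 + 1)]

/-- The partial gradient `D_j L_d ∈ ℝ^m` of a discrete Lagrangian with respect to its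
`j`-th slot. -/
noncomputable def Dslot {m : ℕ} (Ld : (Fin 6 → Fin m → ℝ) → ℝ) (j : Fin 6)
    (c : Fin 6 → Fin m → ℝ) (a : Fin m) : ℝ :=
  fderiv ℝ Ld c (Pi.single j (Pi.single a 1))

/-- The discrete Euler–Lagrange expression `E_{(n,i)}(φ)`. -/
noncomputable def discreteEL {m : ℕ} (Ld : (Fin 6 → Fin m → ℝ) → ℝ)
    (φ : ℤ × ℤ → Fin m → ℝ) (p : ℤ × ℤ) (a : Fin m) : ℝ :=
  Dslot Ld 0 (cellVals φ (p.1, p.2 + 1)) a + Dslot Ld 1 (cellVals φ (p.1, p.2)) a +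
    Dslot Ld 2 (cellVals φ (p.1, p.2 - 1)) a + Dslot Ld 3 (cellVals φ (p.1 - 1, p.2 + 1)) a +
    Dslot Ld 4 (cellVals φ (p.1 - 1, p.2)) a + Dslot Ld 5 (cellVals φ (p.1 - 1, p.2 - 1)) a

/-- the discrete d'Alembert principle: the discrete Euler–Lagrange
expression pairs to zero with all admissible finitely supported variations iff it is a
combination of the discrete reaction forces with Lagrange multipliers. -/
theorem discrete_dAlembert_principle (m k : ℕ) (hk1 : 1 ≤ k) (hkm : k ≤ m)
    (Ld : (Fin 6 → Fin m → ℝ) → ℝ) (hLd : ContDiff ℝ 1 Ld)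
    (φ : ℤ × ℤ → Fin m → ℝ)
    (Φ : Fin k → ℤ × ℤ → Fin m → ℝ)
    (hΦ : ∀ p : ℤ × ℤ, LinearIndependent ℝ (fun α : Fin k => Φ α p)) :
    ((∀ δ : ℤ × ℤ → Fin m → ℝ, (Function.support δ).Finite →
        (∀ p : ℤ × ℤ, ∀ α : Fin k, ∑ a, δ p a * Φ α p a = 0) →
        (∑ᶠ p : ℤ × ℤ, ∑ a, δ p a * discreteEL Ld φ p a) = 0)
      ↔ (∃ lam : Fin k → ℤ × ℤ → ℝ,
          ∀ p : ℤ × ℤ, ∀ a, discreteEL Ld φ p a = ∑ α : Fin k, lam α p * Φ α p a)) := by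
  constructor
  · intro h
    -- for each p, E p lies in the span of the Φ α p
    have key : ∀ p : ℤ × ℤ, ∃ c : Fin k → ℝ,
        ∀ a, discreteEL Ld φ p a = ∑ α : Fin k, c α * Φ α p a := by
      intro p
      set E : EuclideanSpace ℝ (Fin m) := WithLp.toLp 2 (fun a => discreteEL Ld φ p a) with hE
      set K : Submodule ℝ (EuclideanSpace ℝ (Fin m)) :=
        Submodule.span ℝ (Set.range fun α : Fin k => (WithLp.toLp 2 (Φ α p) : EuclideanSpace ℝ (Fin m))) with hK
      have hmem : E ∈ K := by
        rw [← Submodule.orthogonal_orthogonal K]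
        rw [Submodule.mem_orthogonal]
        intro v hv
        have hδ : (∑ᶠ q : ℤ × ℤ, ∑ a, (if q = p then (v : Fin m → ℝ) else 0) a
            * discreteEL Ld φ q a) = 0 := by
          apply h
          · apply Set.Finite.subset (Set.finite_singleton p)
            intro q hq
            by_contra hqp
            simp only [Set.mem_singleton_iff] at hqp
            simp [Function.mem_support, hqp] at hq
          · intro q α
            by_cases hqp : q = p
            · subst hqp
              simp only [if_pos rfl]
              have hvΦ : (inner ℝ v (WithLp.toLp 2 (Φ α q) : EuclideanSpace ℝ (Fin m)) : ℝ) = 0 := by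
                rw [Submodule.mem_orthogonal] at hv
                rw [real_inner_comm]
                exact hv _ (Submodule.subset_span ⟨α, rfl⟩)
              simpa [PiLp.inner_apply, RCLike.inner_apply, conj_trivial, mul_comm] using hvΦ
            · simp [hqp]
        rw [finsum_eq_single _ p (by intro q hq; simp [hq])] at hδ
        simp only [if_pos rfl] at hδ
        simpa [PiLp.inner_apply, RCLike.inner_apply, conj_trivial, hE, mul_comm] using hδ
      rw [hK, Submodule.mem_span_range_iff_exists_fun] at hmem
      obtain ⟨c, hc⟩ := hmem
      refine ⟨c, fun a => ?_⟩
      have h2 := congrArg (EuclideanSpace.proj (𝕜 := ℝ) a) hc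
      simp only [map_sum, map_smul, smul_eq_mul] at h2
      exact h2.symm
    choose c hc using key
    exact ⟨fun α p => c p α, fun p a => hc p a⟩
  · rintro ⟨lam, hlam⟩ δ hδfin hδadm
    apply finsum_eq_zero_of_forall_eq_zero
    intro p
    calc ∑ a, δ p a * discreteEL Ld φ p a
        = ∑ α : Fin k, lam α p * ∑ a, δ p a * Φ α p a := by
          simp_rw [hlam, Finset.mul_sum]
          rw [Finset.sum_comm]
          exact Finset.sum_congr rfl fun α _ => Finset.sum_congr rfl fun a _ => by ring
      _ = 0 := by simp [hδadm p]
end
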